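/- Suppose S is a transitive biorder, i.e. s ▷ t for every pair of distinct elements s, t ∈ S. Then the only good configuration a for S satisfying ẽ_i a = 0 and ẽ_j a = 0 is the zero configuration a ≡ 0. -/

import Mathlib

/-!  Biorders and configurations (Section 4 of the paper).

A biorder is a finite set `S` with two linear orders `>_i`, `>_j` and a labelling
`Γ : S → {i, j}` (here modelled by `Bool`, with `true` standing for the label `i` and
`false` for the label `j`), such that `s >_i t` and `t >_j s` force `Γ s = j` and `Γ t = i`.

A configuration is a function `a : S → ℕ` taking values in `{0, 1, 2}`.

All signature-related notions are defined relative to a finite subset `T ⊆ S`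
(the biorder restricted to `T`); the notions for the biorder `S` itself are recovered
by taking `T = Finset.univ`. -/

attribute [local instance] Classical.propDecidable

namespace BiorderCrystal

structure Biorder (S : Type) where
  /-- the linear order whose strict relation is `<_i` -/
  li : LinearOrder S
  /-- the linear order whose strict relation is `<_j` -/
  lj : LinearOrder S
  /-- the labelling `Γ : S → {i, j}`; `true` means label `i`, `false` means label `j` -/
  lab : S → Bool
  /-- if `s >_i t` and `t >_j s` then `Γ s = j` and `Γ t = i` -/
  compat : ∀ s t : S, li.lt t s → lj.lt s t → lab s = false ∧ lab t = true

variable {S : Type}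

/-- `s <_i t`. -/
def Biorder.lti (B : Biorder S) (s t : S) : Prop := B.li.lt s t

/-- `s <_j t`. -/
def Biorder.ltj (B : Biorder S) (s t : S) : Prop := B.lj.lt s t

/-- The order used for the `h`-signature: `>_i` if `h = true`, `>_j` if `h = false`. -/
def Biorder.ord (B : Biorder S) (h : Bool) : LinearOrder S := if h then B.li else B.lj

/-- `s ≫ t`, i.e. `s >_i t` and `s >_j t`. -/
def Biorder.gg (B : Biorder S) (s t : S) : Prop := B.lti t s ∧ B.ltj t s

/-- `s ⋗ t`, i.e. `s >_i t` or `s >_j t`. -/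
def Biorder.gd (B : Biorder S) (s t : S) : Prop := B.lti t s ∨ B.ltj t s

/-- `▷`, the transitive closure of `⋗`, computed within the subset `T`. -/
def Biorder.triOn (B : Biorder S) (T : Finset S) : S → S → Prop :=
  Relation.TransGen (fun s t => s ∈ T ∧ t ∈ T ∧ B.gd s t)

/-- The sign `π_h(a, s) ∈ {+1, 0, -1}` contributed by `s` to the `h`-signature of `a`. -/
def sgn (B : Biorder S) (h : Bool) (a : S → ℕ) (s : S) : ℤ :=
  if (a s = 0 ∧ B.lab s = h) ∨ (a s = 1 ∧ B.lab s ≠ h) then 1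
  else if (a s = 1 ∧ B.lab s = h) ∨ (a s = 2 ∧ B.lab s ≠ h) then -1
  else 0

variable [Fintype S]

/-- Minus the partial sum of the `h`-signature of `a` (over `T`) along the positions
up to and including that of `s`: the elements of `T` which are `≥ s` in the order `ord h`. -/
noncomputable def G (B : Biorder S) (h : Bool) (T : Finset S) (a : S → ℕ) (s : S) : ℤ :=
  -(∑ t ∈ T.filter (fun t => (B.ord h).le s t), sgn B h a t)

/-- The sum of the `h`-signature of `a` (over `T`) from the position of `s` onwards:
the elements of `T` which are `≤ s` in the order `ord h`. -/
noncomputable def H (B : Biorder S) (h : Bool) (T : Finset S) (a : S → ℕ) (s : S) : ℤ :=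
  ∑ t ∈ T.filter (fun t => (B.ord h).le t s), sgn B h a t

/-- `ε_h(a)` (over `T`): the maximum of `0` and all the partial sums `G`. -/
noncomputable def epsB (B : Biorder S) (h : Bool) (T : Finset S) (a : S → ℕ) : ℤ :=
  T.fold max 0 (G B h T a)

/-- `φ_h(a)` (over `T`): the maximum of `0` and all the partial sums `H`. -/
noncomputable def phiB (B : Biorder S) (h : Bool) (T : Finset S) (a : S → ℕ) : ℤ :=
  T.fold max 0 (H B h T a)

/-- The `h`-good element of `T` for `a`:  the element in the good position of the
`h`-signature, i.e. the `ord h`-greatest element achieving `G = ε_h > 0` (or `none`). -/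
noncomputable def goodElt (B : Biorder S) (h : Bool) (T : Finset S) (a : S → ℕ) : Option S :=
  if hne : (T.filter fun s => 0 < epsB B h T a ∧ G B h T a s = epsB B h T a).Nonempty
  then some (@Finset.max' S (B.ord h) _ hne)
  else none

/-- The `h`-cogood element of `T` for `a`: the element in the cogood position of the
`h`-signature, i.e. the `ord h`-least element achieving `H = φ_h > 0` (or `none`). -/
noncomputable def cogoodElt (B : Biorder S) (h : Bool) (T : Finset S) (a : S → ℕ) : Option S :=
  if hne : (T.filter fun s => 0 < phiB B h T a ∧ H B h T a s = phiB B h T a).Nonempty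
  then some (@Finset.min' S (B.ord h) _ hne)
  else none

/-- The crystal operator `ẽ_h` (over `T`): decrease `a` by one at the `h`-good element,
or `none` (the ghost element `0`) if there is no good position. -/
noncomputable def et (B : Biorder S) (h : Bool) (T : Finset S) (a : S → ℕ) :
    Option (S → ℕ) :=
  (goodElt B h T a).map fun s => Function.update a s (a s - 1)

/-- The crystal operator `f̃_h` (over `T`): increase `a` by one at the `h`-cogood element,
or `none` (the ghost element `0`) if there is no cogood position. -/
noncomputable def ft (B : Biorder S) (h : Bool) (T : Finset S) (a : S → ℕ) :
    Option (S → ℕ) :=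
  (cogoodElt B h T a).map fun s => Function.update a s (a s + 1)

/-- `a` is a good configuration for the biorder restricted to `T`:
axioms G1, G2, G3 of the paper. -/
def IsGoodOn (B : Biorder S) (T : Finset S) (a : S → ℕ) : Prop :=
  (¬ ∃ s ∈ T, ∃ t ∈ T, B.lti t s ∧ B.ltj s t ∧ a s = 1 ∧ a t = 1) ∧
  (¬ ∃ s ∈ T, ∃ t ∈ T, B.gd s t ∧ B.triOn T t s ∧ B.lab s = B.lab t ∧ a s < a t) ∧
  (¬ ∃ q ∈ T, ∃ r ∈ T, ∃ s ∈ T, ∃ t ∈ T,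
      B.gd q r ∧ B.gg r s ∧ B.gd s t ∧ B.gg r t ∧ B.gd t q ∧ B.gg q s ∧
      a q = 2 ∧ a s = 2 ∧ a r = 0 ∧ a t = 0)


section AuxProofs

variable {S : Type}

private lemma lo_tri (lo : LinearOrder S) (s t : S) : lo.lt s t ∨ s = t ∨ lo.lt t s := by
  letI := lo; exact lt_trichotomy s t

private lemma lo_irrefl (lo : LinearOrder S) (s : S) : ¬ lo.lt s s := by
  letI := lo; exact lt_irrefl s

private lemma lo_asymm (lo : LinearOrder S) {s t : S} (h : lo.lt s t) : ¬ lo.lt t s := by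
  letI := lo; exact lt_asymm h

private lemma lo_trans (lo : LinearOrder S) {s t u : S} (h : lo.lt s t) (h2 : lo.lt t u) :
    lo.lt s u := by
  letI := lo; exact lt_trans h h2

private lemma lo_lt_of_le (lo : LinearOrder S) {s t : S} (h : lo.le s t) (hne : s ≠ t) :
    lo.lt s t := by
  letI := lo; exact lt_of_le_of_ne h hne

private lemma lo_not_le (lo : LinearOrder S) {s t : S} (h : lo.lt s t) : ¬ lo.le t s := by
  letI := lo; exact not_le_of_gt h

private lemma sgn_pos {B : Biorder S} {h : Bool} {a : S → ℕ} {x : S} (hp : 0 < sgn B h a x) :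
    (a x = 0 ∧ B.lab x = h) ∨ (a x = 1 ∧ B.lab x ≠ h) := by
  by_contra hc
  rw [sgn, if_neg hc] at hp
  split_ifs at hp <;> omega

private lemma sgn_neg_one {B : Biorder S} {h : Bool} {a : S → ℕ} {x : S}
    (h1 : ¬ ((a x = 0 ∧ B.lab x = h) ∨ (a x = 1 ∧ B.lab x ≠ h)))
    (h2 : (a x = 1 ∧ B.lab x = h) ∨ (a x = 2 ∧ B.lab x ≠ h)) :
    sgn B h a x = -1 := by
  rw [sgn, if_neg h1, if_pos h2]

variable [Fintype S]

private lemma sum_nonneg_of_et_none (B : Biorder S) (h : Bool) (a : S → ℕ)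
    (hn : et B h Finset.univ a = none) (s : S) :
    0 ≤ ∑ t ∈ Finset.univ.filter (fun t => (B.ord h).le s t), sgn B h a t := by
  have hg : goodElt B h Finset.univ a = none := Option.map_eq_none_iff.mp hn
  have hfe : ¬ (Finset.univ.filter fun x => 0 < epsB B h Finset.univ a ∧
      G B h Finset.univ a x = epsB B h Finset.univ a).Nonempty := by
    intro hne
    rw [goodElt, dif_pos hne] at hg
    exact Option.some_ne_none _ hg
  by_contra hlt
  push_neg at hlt
  have hGs : 0 < G B h Finset.univ a s := by
    rw [G]; linarith
  have heps : 0 < epsB B h Finset.univ a := by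
    rw [epsB]
    exact lt_of_lt_of_le hGs
      ((Finset.le_fold_max _).mpr (Or.inr ⟨s, Finset.mem_univ s, le_rfl⟩))
  have hall : ∀ x, G B h Finset.univ a x ≤ epsB B h Finset.univ a := by
    intro x
    rw [epsB]
    exact (Finset.le_fold_max _).mpr (Or.inr ⟨x, Finset.mem_univ x, le_rfl⟩)
  have hatt : ∃ x, G B h Finset.univ a x = epsB B h Finset.univ a := by
    by_contra hno
    push_neg at hno
    have hb : Finset.univ.fold max 0 (G B h Finset.univ a) ≤ epsB B h Finset.univ a - 1 := by
      refine (Finset.fold_max_le _).mpr ⟨by omega, fun x _ => ?_⟩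
      have h1 := hall x
      have h2 := hno x
      omega
    rw [← epsB] at hb
    omega
  obtain ⟨x, hx⟩ := hatt
  exact hfe ⟨x, Finset.mem_filter.mpr ⟨Finset.mem_univ x, heps, hx⟩⟩

private lemma exists_pos_above (B : Biorder S) (h : Bool) (a : S → ℕ) (s : S)
    (hn : et B h Finset.univ a = none) (hs : sgn B h a s = -1) :
    ∃ x, (B.ord h).lt s x ∧ 0 < sgn B h a x := by
  have hsum := sum_nonneg_of_et_none B h a hn s
  by_contra hno
  push_neg at hno
  have hmem : s ∈ Finset.univ.filter (fun t => (B.ord h).le s t) := by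
    refine Finset.mem_filter.mpr ⟨Finset.mem_univ s, ?_⟩
    letI := B.ord h
    exact le_refl s
  have hneg : ∑ t ∈ (Finset.univ.filter (fun t => (B.ord h).le s t)).erase s,
      sgn B h a t ≤ 0 := by
    refine Finset.sum_nonpos fun x hx => ?_
    have hxs := Finset.mem_erase.mp hx
    have hle := (Finset.mem_filter.mp hxs.2).2
    exact hno x (lo_lt_of_le (B.ord h) hle (Ne.symm hxs.1))
  have hsplit := Finset.sum_erase_add
    (Finset.univ.filter (fun t => (B.ord h).le s t)) (sgn B h a) hmem
  omega

end AuxProofs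

/-- Proposition 4.12 of the paper: if the biorder `S` is transitive (i.e. `s ▷ t` for all
distinct `s, t`), then the only good configuration which is a source (killed by both
`ẽ_i` and `ẽ_j`) is the zero configuration. -/
theorem transitive_biorder_unique_source (S : Type) [Fintype S] (B : Biorder S)
    (htrans : ∀ s t : S, s ≠ t → B.triOn Finset.univ s t)
    (a : S → ℕ) (ha : ∀ s, a s ≤ 2)
    (hgood : IsGoodOn B Finset.univ a)
    (h1 : et B true Finset.univ a = none)
    (h2 : et B false Finset.univ a = none) :
    a = fun _ => 0 := by
  classical
  have hsrc : ∀ h : Bool, et B h Finset.univ a = none := by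
    intro h; cases h
    · exact h2
    · exact h1
  have ordT : B.ord true = B.li := rfl
  have ordF : B.ord false = B.lj := rfl
  -- same label implies the two orders agree
  have agIJ : ∀ s t : S, B.lab s = B.lab t → B.li.lt s t → B.lj.lt s t := by
    intro s t hlab hi
    rcases lo_tri B.lj s t with hj | rfl | hj
    · exact hj
    · exact absurd hi (lo_irrefl B.li s)
    · obtain ⟨hh1, hh2⟩ := B.compat t s hi hj
      rw [hlab, hh1] at hh2
      exact absurd hh2 (by decide)
  have agJI : ∀ s t : S, B.lab s = B.lab t → B.lj.lt s t → B.li.lt s t := by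
    intro s t hlab hj
    rcases lo_tri B.li s t with hi | rfl | hi
    · exact hi
    · exact absurd hj (lo_irrefl B.lj s)
    · obtain ⟨hh1, hh2⟩ := B.compat s t hi hj
      rw [hlab] at hh1
      rw [hh1] at hh2
      exact absurd hh2 (by decide)
  have agreeb : ∀ (c : Bool) (s t : S), B.lab s = B.lab t →
      (B.ord c).lt s t → (B.ord (!c)).lt s t := by
    intro c s t hlab hlt
    cases c
    · rw [ordF] at hlt
      show B.li.lt s t
      exact agJI s t hlab hlt
    · rw [ordT] at hlt
      show B.lj.lt s t
      exact agIJ s t hlab hlt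
  have ccross : ∀ (c : Bool) (s t : S), (B.ord c).lt t s → (B.ord (!c)).lt s t →
      B.lab s = (!c) ∧ B.lab t = c := by
    intro c s t hh1 hh2
    cases c
    · rw [ordF] at hh1
      have hh2' : B.li.lt s t := hh2
      obtain ⟨e1, e2⟩ := B.compat t s hh2' hh1
      exact ⟨e2, e1⟩
    · rw [ordT] at hh1
      have hh2' : B.lj.lt s t := hh2
      obtain ⟨e1, e2⟩ := B.compat s t hh1 hh2'
      exact ⟨e1, e2⟩
  have gd_of : ∀ (c : Bool) (s t : S), (B.ord c).lt t s → B.gd s t := by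
    intro c s t hlt
    cases c
    · exact Or.inr hlt
    · exact Or.inl hlt
  -- consequence of G2 + transitivity
  have hG2' : ∀ s t : S, B.lab s = B.lab t → B.gd s t → a t ≤ a s := by
    intro s t hlab hgd
    by_contra hlt
    push_neg at hlt
    have hne : t ≠ s := by rintro rfl; omega
    exact hgood.2.1 ⟨s, Finset.mem_univ s, t, Finset.mem_univ t, hgd,
      htrans t s hne, hlab, hlt⟩
  -- Step 1 : no entries equal to 1
  have no1 : ∀ s, a s ≠ 1 := by
    by_contra hc
    push_neg at hc
    obtain ⟨m0, hm0⟩ := hc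
    have hCne : (Finset.univ.filter fun s => a s = 1).Nonempty :=
      ⟨m0, Finset.mem_filter.mpr ⟨Finset.mem_univ _, hm0⟩⟩
    let m : S := @Finset.max' S B.li _ hCne
    have hmC : a m = 1 := (Finset.mem_filter.mp (@Finset.max'_mem S B.li _ hCne)).2
    have hsgn : sgn B (B.lab m) a m = -1 := by
      refine sgn_neg_one ?_ (Or.inl ⟨hmC, rfl⟩)
      rw [hmC]; simp
    obtain ⟨x, hxlt, hxpos⟩ := exists_pos_above B (B.lab m) a m (hsrc _) hsgn
    rcases sgn_pos hxpos with ⟨hx0, hxlab⟩ | ⟨hx1, hxlab⟩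
    · have hle := hG2' x m hxlab (gd_of (B.lab m) x m hxlt)
      omega
    · have hxC : x ∈ Finset.univ.filter fun s => a s = 1 :=
        Finset.mem_filter.mpr ⟨Finset.mem_univ _, hx1⟩
      have hxm : B.li.le x m := @Finset.le_max' S B.li _ x hxC
      by_cases hlb : B.lab m = true
      · rw [hlb, ordT] at hxlt
        exact lo_not_le B.li hxlt hxm
      · rw [Bool.not_eq_true] at hlb
        rw [hlb, ordF] at hxlt
        have hne : x ≠ m := by
          intro e; rw [e] at hxlab; exact hxlab rfl
        have hlixm : B.li.lt x m := lo_lt_of_le B.li hxm hne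
        exact hgood.1 ⟨m, Finset.mem_univ m, x, Finset.mem_univ x, hlixm, hxlt, hmC, hx1⟩
  -- Step 2 : no entries equal to 2
  have no2 : ∀ s, a s ≠ 2 := by
    by_contra hc
    push_neg at hc
    obtain ⟨q0, hq0⟩ := hc
    obtain ⟨b, hb⟩ : ∃ b, B.lab q0 = b := ⟨_, rfl⟩
    have hbne : b ≠ !b := by cases b <;> decide
    have bne1 : ∀ u v : Bool, ¬ u = v → v = !u := by decide
    have bne2 : ∀ u v : Bool, ¬ u = !v → u = v := by decide
    have bne3 : ∀ u v : Bool, ¬ u = v → u = !v := by decide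
    have hDne : (Finset.univ.filter fun s => B.lab s = b ∧ a s = 2).Nonempty :=
      ⟨q0, Finset.mem_filter.mpr ⟨Finset.mem_univ _, hb, hq0⟩⟩
    let q' : S := @Finset.max' S (B.ord b) _ hDne
    have hq'D : B.lab q' = b ∧ a q' = 2 :=
      (Finset.mem_filter.mp (@Finset.max'_mem S (B.ord b) _ hDne)).2
    have hq'le : ∀ x, B.lab x = b → a x = 2 → (B.ord b).le x q' := fun x e1 e2 =>
      @Finset.le_max' S (B.ord b) _ x (Finset.mem_filter.mpr ⟨Finset.mem_univ _, e1, e2⟩)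
    have htop : ∀ s, B.lab s = b → s ≠ q' →
        (B.ord b).lt s q' ∧ (B.ord (!b)).lt s q' := by
      intro s hs hne
      have key : ∀ c : Bool, ¬ (B.ord c).lt q' s := by
        intro c hlt
        have hgd : B.gd s q' := gd_of c s q' hlt
        have hle2 : a q' ≤ a s := hG2' s q' (hs.trans hq'D.1.symm) hgd
        have has2 : a s = 2 := by have := ha s; omega
        have hle3 : (B.ord b).le s q' := hq'le s hs has2
        have hltb : (B.ord b).lt q' s := by
          by_cases e : c = b
          · rw [e] at hlt; exact hlt
          · have e2 : b = !c := bne1 c b e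
            have := agreeb c q' s (hq'D.1.trans hs.symm) hlt
            rw [← e2] at this
            exact this
        exact lo_not_le (B.ord b) hltb hle3
      constructor
      · rcases lo_tri (B.ord b) s q' with hh | e | hh
        · exact hh
        · exact absurd e hne
        · exact absurd hh (key b)
      · rcases lo_tri (B.ord (!b)) s q' with hh | e | hh
        · exact hh
        · exact absurd e hne
        · exact absurd hh (key (!b))
    have hsgn' : sgn B (!b) a q' = -1 := by
      refine sgn_neg_one ?_ (Or.inr ⟨hq'D.2, by rw [hq'D.1]; exact hbne⟩)
      rw [hq'D.2]; simp
    obtain ⟨x, hxlt, hxpos⟩ := exists_pos_above B (!b) a q' (hsrc _) hsgn'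
    rcases sgn_pos hxpos with ⟨hx0, hxlab⟩ | ⟨hx1, _⟩
    swap
    · exact no1 x hx1
    have hxq : x ≠ q' := by
      intro e
      rw [e, hq'D.1] at hxlab
      exact hbne hxlab
    have hxb : (B.ord b).lt q' x := by
      rcases lo_tri (B.ord b) q' x with hh | e | hh
      · exact hh
      · exact absurd e.symm hxq
      · have hcc := ccross b q' x hh hxlt
        exact absurd (hq'D.1.symm.trans hcc.1) hbne
    have hUne : (Finset.univ : Finset S).Nonempty := ⟨q0, Finset.mem_univ _⟩
    let xs : S := @Finset.max' S (B.ord (!b)) _ hUne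
    have hxsle : ∀ y : S, (B.ord (!b)).le y xs := fun y =>
      @Finset.le_max' S (B.ord (!b)) _ y (Finset.mem_univ y)
    have hlabxs : B.lab xs = !b := by
      by_contra hcl
      have hlbxs : B.lab xs = b := bne2 _ _ hcl
      by_cases e : xs = q'
      · have hh := hxsle x
        rw [e] at hh
        exact lo_not_le (B.ord (!b)) hxlt hh
      · have hh := (htop xs hlbxs e).2
        exact lo_not_le (B.ord (!b)) hh (hxsle q')
    have hq'xs : (B.ord b).lt q' xs := by
      by_cases e : x = xs
      · rw [← e]; exact hxb
      · have hltx : (B.ord (!b)).lt x xs := lo_lt_of_le _ (hxsle x) e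
        have hltx2 : (B.ord b).lt x xs := by
          have := agreeb (!b) x xs (hxlab.trans hlabxs.symm) hltx
          rwa [Bool.not_not] at this
        exact lo_trans (B.ord b) hxb hltx2
    have hmaxb : ∀ y : S, y ≠ xs → (B.ord b).lt y xs := by
      intro y hne
      by_cases hly : B.lab y = b
      · by_cases e : y = q'
        · rw [e]; exact hq'xs
        · exact lo_trans (B.ord b) (htop y hly e).1 hq'xs
      · have hly2 : B.lab y = !b := bne3 _ _ hly
        have hlt2 : (B.ord (!b)).lt y xs := lo_lt_of_le _ (hxsle y) hne
        have := agreeb (!b) y xs (hly2.trans hlabxs.symm) hlt2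
        rwa [Bool.not_not] at this
    have hmaxnb : ∀ y : S, y ≠ xs → (B.ord (!b)).lt y xs := fun y hne =>
      lo_lt_of_le _ (hxsle y) hne
    have hqne : q' ≠ xs := by
      intro e
      rw [← e] at hlabxs
      exact hbne (hq'D.1.symm.trans hlabxs)
    have htr : B.triOn Finset.univ q' xs := htrans q' xs hqne
    obtain ⟨y, hy⟩ : ∃ y, B.gd y xs := by
      cases htr with
      | single hstep => exact ⟨q', hstep.2.2⟩
      | tail _ hstep => exact ⟨_, hstep.2.2⟩
    have hyne : y ≠ xs := by
      rintro rfl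
      rcases hy with hh | hh
      · exact lo_irrefl B.li _ hh
      · exact lo_irrefl B.lj _ hh
    have hya : (B.ord b).lt y xs := hmaxb y hyne
    have hyb : (B.ord (!b)).lt y xs := hmaxnb y hyne
    have hyi : B.li.lt y xs := by
      cases b
      · exact hyb
      · exact hya
    have hyj : B.lj.lt y xs := by
      cases b
      · exact hya
      · exact hyb
    rcases hy with hh | hh
    · exact lo_asymm B.li hyi hh
    · exact lo_asymm B.lj hyj hh
  funext s
  have h1s := ha s
  have h2s := no1 s
  have h3s := no2 s
  show a s = 0
  omega

end BiorderCrystal
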